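/- Let K be a field and q ∈ K with q ≠ 0 and {n}_q ≠ 0 for every nonzero integer n. Then the powers {1, D_q, D_q², …} of the operator D_q on L are linearly independent over the polynomial ring in M: if p_0, …, p_m ∈ K[X] are polynomials such that Σ_{j=0}^{m} p_j(M) ∘ D_q^j = 0 as an operator on L, then p_j = 0 for all j. In particular, every element of the K-subalgebra of End_K(L) generated by M and D_q is uniquely expressible as Σ_{j=0}^{m} p_j(M) D_q^j with p_j ∈ K[X]. -/

import Mathlib

noncomputable section

open Classical in
/-- The `q`-integer `{n}_q = (qⁿ − 1)/(q − 1)` for `q ≠ 1`, and `{n}_q = n·1_K` for `q = 1`. -/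
def qInt (K : Type*) [Field K] (q : K) (n : ℤ) : K :=
  if q = 1 then (n : K) else (q ^ n - 1) / (q - 1)

/-- The defining relation `AB = q·BA + 1` of the `q`-deformed Heisenberg algebra,
imposed on the free algebra on two generators. -/
inductive qHeisRel (K : Type*) [Field K] (q : K) :
    FreeAlgebra K (Fin 2) → FreeAlgebra K (Fin 2) → Prop
  | rel : qHeisRel K q (FreeAlgebra.ι K 0 * FreeAlgebra.ι K 1)
      (q • (FreeAlgebra.ι K 1 * FreeAlgebra.ι K 0) + 1)

/-- The `q`-deformed Heisenberg algebra `H_q = K⟨A,B⟩/⟨AB − qBA − 1⟩`. -/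
abbrev qHeis (K : Type*) [Field K] (q : K) : Type _ := RingQuot (qHeisRel K q)

/-- The generator `A` of `H_q`. -/
def qA (K : Type*) [Field K] (q : K) : qHeis K q :=
  RingQuot.mkAlgHom K (qHeisRel K q) (FreeAlgebra.ι K 0)

/-- The generator `B` of `H_q`. -/
def qB (K : Type*) [Field K] (q : K) : qHeis K q :=
  RingQuot.mkAlgHom K (qHeisRel K q) (FreeAlgebra.ι K 1)
/-- Multiplication by `t` on the space `L` of formal Laurent series `Σ aₙ tⁿ`,
realized as the space of functions `ℤ → K`: `(M f)(n) = f(n−1)`. -/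
def Mop (K : Type*) [Field K] : Module.End K (ℤ → K) where
  toFun f := fun n => f (n - 1)
  map_add' _ _ := rfl
  map_smul' _ _ := rfl

/-- The `q`-difference operator `D_q` on Laurent series: `(D_q f)(n) = {n+1}_q · f(n+1)`. -/
def Dq (K : Type*) [Field K] (q : K) : Module.End K (ℤ → K) where
  toFun f := fun n => qInt K q (n + 1) * f (n + 1)
  map_add' f g := by funext n; simp [mul_add]
  map_smul' c f := by funext n; simp [Pi.smul_apply, smul_eq_mul]; ring


namespace QHaux

variable {K : Type*} [Field K] (q : K)

lemma qInt_zero : qInt K q 0 = 0 := by simp [qInt]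

lemma mop_pow_apply (k : ℕ) (f : ℤ → K) (n : ℤ) : ((Mop K ^ k) f) n = f (n - k) := by
  induction k generalizing f n with
  | zero => simp
  | succ k ih =>
    rw [pow_succ, Module.End.mul_apply, ih]
    show f (n - k - 1) = f (n - (k+1 : ℕ))
    congr 1; push_cast; ring

lemma aeval_single (p : Polynomial K) (b : ℤ) (k : ℕ) :
    ((Polynomial.aeval (Mop K) p) ((Pi.single b 1 : ℤ → K))) (b + k) = p.coeff k := by
  induction p using Polynomial.induction_on' with
  | add p r hp hr =>
    rw [map_add, LinearMap.add_apply, Pi.add_apply, hp, hr, Polynomial.coeff_add]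
  | monomial n a =>
    rw [Polynomial.aeval_monomial, Polynomial.coeff_monomial]
    have : (algebraMap K (Module.End K (ℤ → K)) a) = a • (1 : Module.End K (ℤ → K)) := by
      simp [Algebra.algebraMap_eq_smul_one]
    rw [this, smul_mul_assoc, one_mul, LinearMap.smul_apply, Pi.smul_apply,
      mop_pow_apply, smul_eq_mul]
    have hs : (Pi.single b 1 : ℤ → K) (b + k - n) = if (n : ℤ) = k then 1 else 0 := by
      rw [Pi.single_apply]
      by_cases h : (n : ℤ) = k
      · simp [h]
      · have : b + (k:ℤ) - n ≠ b := by omega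
        simp [this, h]
    rw [hs]
    by_cases h : n = k
    · simp [h]
    · have : (n:ℤ) ≠ k := by exact_mod_cast h
      simp [h, this]

lemma dq_single (a : ℤ) :
    (Dq K q) ((Pi.single a 1 : ℤ → K)) = qInt K q a • (Pi.single (a - 1) 1 : ℤ → K) := by
  funext n
  by_cases h : n = a - 1
  · have h2 : n + 1 = a := by omega
    simp [Dq, Pi.single_apply, h, h2]
  · have h2 : n + 1 ≠ a := by omega
    simp [Dq, Pi.single_apply, h, h2]

lemma dq_pow_single (j : ℕ) (a : ℤ) :
    (Dq K q ^ j) ((Pi.single a 1 : ℤ → K)) =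
      (∏ i ∈ Finset.range j, qInt K q (a - i)) • (Pi.single (a - j) 1 : ℤ → K) := by
  induction j generalizing a with
  | zero => simp
  | succ j ih =>
    rw [pow_succ, Module.End.mul_apply, dq_single, map_smul, ih, smul_smul,
      Finset.prod_range_succ']
    have h1 : ∀ i : ℕ, a - 1 - (i:ℤ) = a - ((i:ℕ)+1 : ℕ) := by intro i; push_cast; ring
    have h2 : a - 1 - (j:ℤ) = a - ((j:ℕ)+1 : ℕ) := by push_cast; ring
    rw [h2]
    congr 1
    · rw [mul_comm]
      congr 1
      · exact Finset.prod_congr rfl fun i _ => by rw [h1]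
      · simp


lemma part1 (hfree : ∀ n : ℤ, n ≠ 0 → qInt K q n ≠ 0)
    (m : ℕ) (p : ℕ → Polynomial K)
    (h : (∑ j ∈ Finset.range (m + 1), Polynomial.aeval (Mop K) (p j) * Dq K q ^ j) = 0) :
    ∀ j ≤ m, p j = 0 := by
  intro j
  induction j using Nat.strong_induction_on with
  | _ j ih =>
    intro hjm
    have key : ∀ k : ℕ, (∏ i ∈ Finset.range j, qInt K q ((j:ℤ) - i)) * (p j).coeff k = 0 := by
      intro k
      have h0 : (∑ j' ∈ Finset.range (m + 1), Polynomial.aeval (Mop K) (p j') * Dq K q ^ j')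
          ((Pi.single (j:ℤ) 1 : ℤ → K)) (((j:ℤ) - (j:ℕ)) + k) = 0 := by
        rw [h]; rfl
      rw [LinearMap.sum_apply, Finset.sum_apply] at h0
      have hterm : ∀ j' : ℕ, (Polynomial.aeval (Mop K) (p j') * Dq K q ^ j')
          ((Pi.single (j:ℤ) 1 : ℤ → K)) (((j:ℤ) - (j:ℕ)) + k)
          = (∏ i ∈ Finset.range j', qInt K q ((j:ℤ) - i)) *
            ((Polynomial.aeval (Mop K) (p j')) ((Pi.single ((j:ℤ) - j') 1 : ℤ → K))
              (((j:ℤ) - (j:ℕ)) + k)) := by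
        intro j'
        rw [Module.End.mul_apply, dq_pow_single, map_smul]
        rfl
      rw [Finset.sum_congr rfl (fun j' _ => hterm j')] at h0
      rw [Finset.sum_eq_single j (fun j' _ hne => ?_) (fun habs => ?_)] at h0
      · rw [aeval_single] at h0
        exact h0
      · rcases lt_or_gt_of_ne hne with hlt | hgt
        · rw [ih j' hlt (le_trans (le_of_lt hlt) hjm), map_zero]
          simp
        · rw [Finset.prod_eq_zero (Finset.mem_range.2 hgt) (by simp [qInt_zero]), zero_mul]
      · exact absurd (Finset.mem_range.2 (Nat.lt_succ_of_le hjm)) habs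
    have hc : (∏ i ∈ Finset.range j, qInt K q ((j:ℤ) - i)) ≠ 0 := by
      apply Finset.prod_ne_zero_iff.2
      intro i hi
      apply hfree
      have := Finset.mem_range.1 hi
      omega
    ext k
    have := key k
    rcases mul_eq_zero.1 this with h' | h'
    · exact absurd h' hc
    · simpa using h'

def NF (m : ℕ) (p : ℕ → Polynomial K) : Module.End K (ℤ → K) :=
  ∑ j ∈ Finset.range (m + 1), Polynomial.aeval (Mop K) (p j) * Dq K q ^ j

def S : Set (Module.End K (ℤ → K)) := {T | ∃ m p, T = NF q m p}

lemma NF_pad (m m' : ℕ) (hmm : m ≤ m') (p : ℕ → Polynomial K) :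
    NF q m' (fun j => if j ≤ m then p j else 0) = NF q m p := by
  unfold NF
  rw [← Finset.sum_subset (Finset.range_subset_range.2 (by omega : m + 1 ≤ m' + 1))
      (fun j _ hj => by
        have hj' : ¬ j ≤ m := by
          simp only [Finset.mem_range, Nat.lt_succ_iff] at hj; omega
        simp [hj'])]
  exact Finset.sum_congr rfl fun j hj => by
    have : j ≤ m := Nat.lt_succ_iff.1 (Finset.mem_range.1 hj)
    simp [this]

lemma zero_mem_S : (0 : Module.End K (ℤ → K)) ∈ S q :=
  ⟨0, fun _ => 0, by simp [NF]⟩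

lemma add_mem_S {x y : Module.End K (ℤ → K)} (hx : x ∈ S q) (hy : y ∈ S q) :
    x + y ∈ S q := by
  obtain ⟨m1, p1, rfl⟩ := hx
  obtain ⟨m2, p2, rfl⟩ := hy
  refine ⟨max m1 m2, fun j => (if j ≤ m1 then p1 j else 0) + (if j ≤ m2 then p2 j else 0), ?_⟩
  rw [← NF_pad q m1 (max m1 m2) (le_max_left _ _) p1,
    ← NF_pad q m2 (max m1 m2) (le_max_right _ _) p2]
  unfold NF
  rw [← Finset.sum_add_distrib]
  exact Finset.sum_congr rfl fun j _ => by rw [map_add, add_mul]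

lemma sum_mem_S {ι : Type*} (t : Finset ι) (g : ι → Module.End K (ℤ → K))
    (hg : ∀ i ∈ t, g i ∈ S q) : (∑ i ∈ t, g i) ∈ S q := by
  classical
  induction t using Finset.induction_on with
  | empty => simpa using zero_mem_S q
  | insert a t hni ih =>
    rw [Finset.sum_insert hni]
    exact add_mem_S q (hg a (Finset.mem_insert_self a t))
      (ih fun i hi => hg i (Finset.mem_insert_of_mem hi))

lemma single_term_mem_S (r : Polynomial K) (k : ℕ) :
    Polynomial.aeval (Mop K) r * Dq K q ^ k ∈ S q := by
  refine ⟨k, fun j => if j = k then r else 0, ?_⟩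
  unfold NF
  rw [Finset.sum_eq_single k (fun j _ hne => by simp [hne]) (fun habs => by simp at habs)]
  simp

lemma aeval_mul_mem_S (r : Polynomial K) {T : Module.End K (ℤ → K)} (hT : T ∈ S q) :
    Polynomial.aeval (Mop K) r * T ∈ S q := by
  obtain ⟨m, p, rfl⟩ := hT
  refine ⟨m, fun j => r * p j, ?_⟩
  unfold NF
  rw [Finset.mul_sum]
  exact Finset.sum_congr rfl fun j _ => by rw [map_mul, mul_assoc]

lemma qInt_succ (hq : q ≠ 0) (n : ℤ) : qInt K q (n + 1) = q * qInt K q n + 1 := by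
  unfold qInt
  split_ifs with h
  · subst h; push_cast; ring
  · have hq1 : q - 1 ≠ 0 := sub_ne_zero.2 h
    rw [zpow_add_one₀ hq]
    field_simp
    ring

lemma dq_mul_mop (hq : q ≠ 0) :
    Dq K q * Mop K = q • (Mop K * Dq K q) + 1 := by
  apply LinearMap.ext
  intro f
  funext n
  show qInt K q (n + 1) * f (n + 1 - 1) = q * (qInt K q (n - 1 + 1) * f (n - 1 + 1)) + f n
  rw [qInt_succ q hq]
  ring_nf

lemma dq_mul_aeval (hq : q ≠ 0) (r : Polynomial K) :
    ∃ r1 r2 : Polynomial K,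
      Dq K q * Polynomial.aeval (Mop K) r =
        Polynomial.aeval (Mop K) r1 * Dq K q + Polynomial.aeval (Mop K) r2 := by
  induction r using Polynomial.induction_on with
  | C a =>
    refine ⟨Polynomial.C a, 0, ?_⟩
    simp [Polynomial.aeval_C, Algebra.commutes]
  | add r s hr hs =>
    obtain ⟨r1, r2, hr⟩ := hr
    obtain ⟨s1, s2, hs⟩ := hs
    refine ⟨r1 + s1, r2 + s2, ?_⟩
    rw [map_add, mul_add, hr, hs, map_add, map_add]
    noncomm_ring
  | monomial n a ih =>
    obtain ⟨r1, r2, ih⟩ := ih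
    refine ⟨Polynomial.C q * r1 * Polynomial.X, r2 * Polynomial.X + r1, ?_⟩
    have key : (Polynomial.aeval (Mop K)) (Polynomial.C a * Polynomial.X ^ (n + 1)) =
        (Polynomial.aeval (Mop K)) (Polynomial.C a * Polynomial.X ^ n) * Mop K := by
      rw [pow_succ, ← mul_assoc, map_mul, Polynomial.aeval_X]
    rw [key, ← mul_assoc, ih, add_mul, mul_assoc, mul_assoc, dq_mul_mop q hq,
      mul_add, mul_one, mul_smul_comm]
    simp only [map_mul, map_add, Polynomial.aeval_X, Polynomial.aeval_C]
    rw [Algebra.smul_def]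
    noncomm_ring

lemma dq_mul_mem_S (hq : q ≠ 0) {T : Module.End K (ℤ → K)} (hT : T ∈ S q) :
    Dq K q * T ∈ S q := by
  obtain ⟨m, p, rfl⟩ := hT
  unfold NF
  rw [Finset.mul_sum]
  apply sum_mem_S
  intro j _
  obtain ⟨r1, r2, hr⟩ := dq_mul_aeval q hq (p j)
  rw [← mul_assoc, hr, add_mul, mul_assoc, ← pow_succ']
  exact add_mem_S q (single_term_mem_S q r1 (j + 1)) (single_term_mem_S q r2 j)

lemma dq_pow_mul_mem_S (hq : q ≠ 0) (k : ℕ) {T : Module.End K (ℤ → K)} (hT : T ∈ S q) :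
    Dq K q ^ k * T ∈ S q := by
  induction k with
  | zero => simpa using hT
  | succ k ih =>
    rw [pow_succ', mul_assoc]
    exact dq_mul_mem_S q hq ih

lemma mul_mem_S (hq : q ≠ 0) {x y : Module.End K (ℤ → K)}
    (hx : x ∈ S q) (hy : y ∈ S q) : x * y ∈ S q := by
  obtain ⟨m, p, rfl⟩ := hx
  unfold NF
  rw [Finset.sum_mul]
  apply sum_mem_S
  intro j _
  rw [mul_assoc]
  exact aeval_mul_mem_S q _ (dq_pow_mul_mem_S q hq j hy)

lemma mop_mem_S : Mop K ∈ S q := by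
  refine ⟨0, fun _ => Polynomial.X, ?_⟩
  simp [NF]

lemma dq_mem_S : Dq K q ∈ S q := by
  refine ⟨1, fun j => if j = 1 then 1 else 0, ?_⟩
  unfold NF
  rw [Finset.sum_range_succ, Finset.sum_range_one]
  simp

lemma algebraMap_mem_S (c : K) : algebraMap K (Module.End K (ℤ → K)) c ∈ S q := by
  refine ⟨0, fun _ => Polynomial.C c, ?_⟩
  simp [NF, Polynomial.aeval_C]

end QHaux

/-- If `q ≠ 0` and `{n}_q ≠ 0` for every nonzero integer `n`, then the powers of `D_q` are
linearly independent over the polynomial ring in `M`: if `Σ_{j=0}^m p_j(M) ∘ D_q^j = 0`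
with `p_j ∈ K[X]`, then all `p_j = 0`. In particular, every element of the `K`-subalgebra
of `End_K(L)` generated by `M` and `D_q` is (uniquely) expressible as `Σ p_j(M) D_q^j`. -/
theorem qHeis_operators_unique_normal_form
    {K : Type*} [Field K] (q : K) (hq : q ≠ 0)
    (hfree : ∀ n : ℤ, n ≠ 0 → qInt K q n ≠ 0) :
    (∀ (m : ℕ) (p : ℕ → Polynomial K),
        (∑ j ∈ Finset.range (m + 1), Polynomial.aeval (Mop K) (p j) * Dq K q ^ j) = 0 →
        ∀ j ≤ m, p j = 0) ∧
    (∀ T ∈ Algebra.adjoin K ({Mop K, Dq K q} : Set (Module.End K (ℤ → K))),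
        ∃ (m : ℕ) (p : ℕ → Polynomial K),
          T = ∑ j ∈ Finset.range (m + 1), Polynomial.aeval (Mop K) (p j) * Dq K q ^ j) := by
  constructor
  · exact QHaux.part1 q hfree
  · intro T hT
    have : T ∈ QHaux.S q := by
      induction hT using Algebra.adjoin_induction with
      | mem x hx =>
        rcases hx with h | h
        · rw [h]; exact QHaux.mop_mem_S q
        · rw [Set.mem_singleton_iff.1 h]; exact QHaux.dq_mem_S q
      | algebraMap c => exact QHaux.algebraMap_mem_S q c
      | add x y _ _ hx hy => exact QHaux.add_mem_S q hx hy
      | mul x y _ _ hx hy => exact QHaux.mul_mem_S q hq hx hy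
    obtain ⟨m, p, rfl⟩ := this
    exact ⟨m, p, rfl⟩
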